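/- Given simulations f : R ⇒ S and g : S ⇒ T between automata with boundary R, S, T : X → Y with initial states, the composite of the state maps and the composite of the motion maps of f and g define a simulation g∘f : R ⇒ T. -/
import Mathlib


/-- An automaton with boundary `S : X → Y`, where the action sets `X`, `Y`
have trivial (reflexive) actions `eX`, `eY`. -/
structure Aut (X Y : Type) (eX : X) (eY : Y) where
  State : Type
  Motion : Type
  src : Motion → State
  tgt : Motion → State
  refl : State → Motion
  refl_src : ∀ v, src (refl v) = v
  refl_tgt : ∀ v, tgt (refl v) = v
  labL : Motion → X
  labR : Motion → Y
  labL_refl : ∀ v, labL (refl v) = eX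
  labR_refl : ∀ v, labR (refl v) = eY

namespace Aut

variable {X Y Z W : Type} {eX : X} {eY : Y} {eZ : Z} {eW : W}

/-- The binding `S·T` of automata `S : X → Y` and `T : Y → Z`. -/
def bind (S : Aut X Y eX eY) (T : Aut Y Z eY eZ) : Aut X Z eX eZ where
  State := S.State × T.State
  Motion := {p : S.Motion × T.Motion // S.labR p.1 = T.labL p.2}
  src p := (S.src p.val.1, T.src p.val.2)
  tgt p := (S.tgt p.val.1, T.tgt p.val.2)
  refl v := ⟨(S.refl v.1, T.refl v.2), by rw [S.labR_refl, T.labL_refl]⟩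
  refl_src v := by simp [S.refl_src, T.refl_src]
  refl_tgt v := by simp [S.refl_tgt, T.refl_tgt]
  labL p := S.labL p.val.1
  labR p := T.labR p.val.2
  labL_refl v := S.labL_refl v.1
  labR_refl v := T.labR_refl v.2

/-- The product `S×T` of automata `S : X → Y` and `T : Z → W`. -/
def prod (S : Aut X Y eX eY) (T : Aut Z W eZ eW) :
    Aut (X × Z) (Y × W) (eX, eZ) (eY, eW) where
  State := S.State × T.State
  Motion := S.Motion × T.Motion
  src p := (S.src p.1, T.src p.2)
  tgt p := (S.tgt p.1, T.tgt p.2)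
  refl v := (S.refl v.1, T.refl v.2)
  refl_src v := by simp [S.refl_src, T.refl_src]
  refl_tgt v := by simp [S.refl_tgt, T.refl_tgt]
  labL p := (S.labL p.1, T.labL p.2)
  labR p := (S.labR p.1, T.labR p.2)
  labL_refl v := by simp [S.labL_refl, T.labL_refl]
  labR_refl v := by simp [S.labR_refl, T.labR_refl]

/-- The feedback `fb_Y S` of an automaton `S : X×Y → Y×Z`. -/
def fb (S : Aut (X × Y) (Y × Z) (eX, eY) (eY, eZ)) : Aut X Z eX eZ where
  State := S.State
  Motion := {e : S.Motion // (S.labL e).2 = (S.labR e).1}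
  src e := S.src e.val
  tgt e := S.tgt e.val
  refl v := ⟨S.refl v, by rw [S.labL_refl, S.labR_refl]⟩
  refl_src v := S.refl_src v
  refl_tgt v := S.refl_tgt v
  labL e := (S.labL e.val).1
  labR e := (S.labR e.val).2
  labL_refl v := by simp [S.labL_refl]
  labR_refl v := by simp [S.labR_refl]

/-- The identity automaton on an action set `X`. -/
def ident (X : Type) (eX : X) : Aut X X eX eX where
  State := PUnit
  Motion := X
  src _ := PUnit.unit
  tgt _ := PUnit.unit
  refl _ := eX
  refl_src _ := rfl
  refl_tgt _ := rfl
  labL x := x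
  labR x := x
  labL_refl _ := rfl
  labR_refl _ := rfl

end Aut

/-- `IsPath A v l w` : the list of motions `l` is a finite behaviour of `A`
from the state `v` ending at the state `w`. -/
def IsPath {X Y : Type} {eX : X} {eY : Y} (A : Aut X Y eX eY) :
    A.State → List A.Motion → A.State → Prop
  | v, [], w => v = w
  | v, e :: l, w => A.src e = v ∧ IsPath A (A.tgt e) l w

/-- `w` is reachable from `v`: there is a finite (possibly empty) behaviour from `v` to `w`. -/
def Reaches {X Y : Type} {eX : X} {eY : Y} (A : Aut X Y eX eY) (v w : A.State) : Prop :=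
  ∃ l, IsPath A v l w

/-- A state is a deadlock if the only motion out of it is the reflexive motion. -/
def Deadlock {X Y : Type} {eX : X} {eY : Y} (A : Aut X Y eX eY) (v : A.State) : Prop :=
  ∀ e, A.src e = v → e = A.refl v

/-- A behaviour (finite or infinite) of `A` from the state `v0`, encoded as a
finite-or-infinite sequence `Stream'.Seq` of motions. -/
def IsBehaviour {X Y : Type} {eX : X} {eY : Y} (A : Aut X Y eX eY) (v0 : A.State)
    (s : Stream'.Seq A.Motion) : Prop :=
  (∀ e, s.get? 0 = some e → A.src e = v0) ∧
  (∀ k e f, s.get? k = some e → s.get? (k + 1) = some f → A.src f = A.tgt e)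

/-- A comparison of automata: maps on states and motions preserving sources,
targets, reflexive motions and boundary labels. -/
structure Comparison {X Y : Type} {eX : X} {eY : Y} (S T : Aut X Y eX eY) where
  onState : S.State → T.State
  onMotion : S.Motion → T.Motion
  src_eq : ∀ e, T.src (onMotion e) = onState (S.src e)
  tgt_eq : ∀ e, T.tgt (onMotion e) = onState (S.tgt e)
  refl_eq : ∀ v, onMotion (S.refl v) = T.refl (onState v)
  labL_eq : ∀ e, T.labL (onMotion e) = S.labL e
  labR_eq : ∀ e, T.labR (onMotion e) = S.labR e

/-- An isomorphism of automata: bijections on states and motions preserving sources,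
targets, reflexive motions and boundary labels. -/
structure AutIso {X Y : Type} {eX : X} {eY : Y} (S T : Aut X Y eX eY) where
  stateEquiv : S.State ≃ T.State
  motionEquiv : S.Motion ≃ T.Motion
  src_eq : ∀ e, T.src (motionEquiv e) = stateEquiv (S.src e)
  tgt_eq : ∀ e, T.tgt (motionEquiv e) = stateEquiv (S.tgt e)
  refl_eq : ∀ v, motionEquiv (S.refl v) = T.refl (stateEquiv v)
  labL_eq : ∀ e, T.labL (motionEquiv e) = S.labL e
  labR_eq : ∀ e, T.labR (motionEquiv e) = S.labR e

/-- The reachable subautomaton `r(A)` of `A` with initial state `v0`. -/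
def reach {X Y : Type} {eX : X} {eY : Y} (A : Aut X Y eX eY) (v0 : A.State) :
    Aut X Y eX eY where
  State := {v : A.State // Reaches A v0 v}
  Motion := {e : A.Motion // Reaches A v0 (A.src e) ∧ Reaches A v0 (A.tgt e)}
  src e := ⟨A.src e.val, e.property.1⟩
  tgt e := ⟨A.tgt e.val, e.property.2⟩
  refl v := ⟨A.refl v.val, by rw [A.refl_src, A.refl_tgt]; exact ⟨v.property, v.property⟩⟩
  refl_src v := Subtype.ext (A.refl_src v.val)
  refl_tgt v := Subtype.ext (A.refl_tgt v.val)
  labL e := A.labL e.val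
  labR e := A.labR e.val
  labL_refl v := A.labL_refl v.val
  labR_refl v := A.labR_refl v.val

/-- The initial state of `A`, as a state of the reachable subautomaton `r(A)`. -/
def reachInit {X Y : Type} {eX : X} {eY : Y} (A : Aut X Y eX eY) (v0 : A.State) :
    (reach A v0).State :=
  ⟨v0, ⟨[], rfl⟩⟩

/-- A simulation `S ⇒ T` of automata with initial states: a comparison
`r(S) → r(T)` preserving the initial state and satisfying the lifting property. -/
structure Simulation {X Y : Type} {eX : X} {eY : Y} (S T : Aut X Y eX eY)
    (v0 : S.State) (w0 : T.State) where
  comp : Comparison (reach S v0) (reach T w0)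
  init : (comp.onState (reachInit S v0)).val = w0
  lift : ∀ (v : (reach S v0).State) (e : (reach T w0).Motion),
      (reach T w0).src e = comp.onState v →
      ∃ (l : List ((reach S v0).Motion)) (e' : (reach S v0).Motion)
        (v' : (reach S v0).State),
        IsPath (reach S v0) v (l ++ [e']) v' ∧
        (∀ m ∈ l, comp.onMotion m = (reach T w0).refl (comp.onState v)) ∧
        comp.onMotion e' = e

lemma isPath_append {X Y : Type} {eX : X} {eY : Y} (A : Aut X Y eX eY)
    (l1 l2 : List A.Motion) (v w : A.State) :
    IsPath A v (l1 ++ l2) w ↔ ∃ u, IsPath A v l1 u ∧ IsPath A u l2 w := by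
  induction l1 generalizing v with
  | nil => simp [IsPath]
  | cons e l ih => simp [IsPath, ih, and_assoc]

lemma isPath_concat {X Y : Type} {eX : X} {eY : Y} (A : Aut X Y eX eY)
    {l1 l2 : List A.Motion} {v u w : A.State}
    (h1 : IsPath A v l1 u) (h2 : IsPath A u l2 w) : IsPath A v (l1 ++ l2) w :=
  (isPath_append A l1 l2 v w).2 ⟨u, h1, h2⟩

lemma lift_list {X Y : Type} {eX : X} {eY : Y}
    (R S T : Aut X Y eX eY) (u0 : R.State) (v0 : S.State) (w0 : T.State)
    (f : Simulation R S u0 v0) (g : Simulation S T v0 w0)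
    (t0 : (reach T w0).State)
    (l : List ((reach S v0).Motion)) :
    ∀ (v : (reach R u0).State) (s' : (reach S v0).State),
      IsPath (reach S v0) (f.comp.onState v) l s' →
      g.comp.onState (f.comp.onState v) = t0 →
      (∀ m ∈ l, g.comp.onMotion m = (reach T w0).refl t0) →
      ∃ (L : List ((reach R u0).Motion)) (v' : (reach R u0).State),
        IsPath (reach R u0) v L v' ∧
        (∀ m ∈ L, g.comp.onMotion (f.comp.onMotion m) = (reach T w0).refl t0) ∧
        f.comp.onState v' = s' := by
  induction l with
  | nil =>
    intro v s' hpath hv _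
    exact ⟨[], v, rfl, by simp, hpath⟩
  | cons m l ih =>
    intro v s' hpath hv hrefl
    obtain ⟨hsrc, hrest⟩ := hpath
    obtain ⟨l₁, e', v₁, hpath₁, hrefl₁, he'⟩ := f.lift v m hsrc
    -- v₁ is the target of e'
    obtain ⟨u, hl₁, hu⟩ := (isPath_append _ l₁ [e'] v v₁).1 hpath₁
    obtain ⟨hsrce', htgte'⟩ := hu
    have htgte' : (reach R u0).tgt e' = v₁ := htgte'
    have hfv₁ : f.comp.onState v₁ = (reach S v0).tgt m := by
      rw [← htgte', ← f.comp.tgt_eq, he']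
    have hgm := hrefl m (by simp)
    have hv₁ : g.comp.onState (f.comp.onState v₁) = t0 := by
      rw [hfv₁, ← g.comp.tgt_eq, hgm, (reach T w0).refl_tgt]
    have hrest' : IsPath (reach S v0) (f.comp.onState v₁) l s' := by
      rwa [hfv₁]
    obtain ⟨L₂, v', hL₂, hL₂refl, hfv'⟩ :=
      ih v₁ s' hrest' hv₁ (fun m' hm' => hrefl m' (by simp [hm']))
    refine ⟨(l₁ ++ [e']) ++ L₂, v', isPath_concat _ hpath₁ hL₂, ?_, hfv'⟩
    intro m' hm'
    rcases List.mem_append.1 hm' with hm' | hm'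
    · rcases List.mem_append.1 hm' with hm' | hm'
      · rw [hrefl₁ m' hm', g.comp.refl_eq, hv]
      · simp only [List.mem_singleton] at hm'
        rw [hm', he', hgm]
    · exact hL₂refl m' hm'

def compComparison {X Y : Type} {eX : X} {eY : Y}
    (R S T : Aut X Y eX eY) (u0 : R.State) (v0 : S.State) (w0 : T.State)
    (f : Simulation R S u0 v0) (g : Simulation S T v0 w0) :
    Comparison (reach R u0) (reach T w0) where
  onState v := g.comp.onState (f.comp.onState v)
  onMotion e := g.comp.onMotion (f.comp.onMotion e)
  src_eq e := by rw [g.comp.src_eq, f.comp.src_eq]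
  tgt_eq e := by rw [g.comp.tgt_eq, f.comp.tgt_eq]
  refl_eq v := by
    show g.comp.onMotion (f.comp.onMotion ((reach R u0).refl v)) = _
    rw [f.comp.refl_eq, g.comp.refl_eq]
  labL_eq e := by rw [g.comp.labL_eq, f.comp.labL_eq]
  labR_eq e := by rw [g.comp.labR_eq, f.comp.labR_eq]

/-- The composites of the state maps and of the motion maps of two
simulations `f : R ⇒ S` and `g : S ⇒ T` define a simulation `g∘f : R ⇒ T`. -/
theorem simulation_comp {X Y : Type} {eX : X} {eY : Y}
    (R S T : Aut X Y eX eY) (u0 : R.State) (v0 : S.State) (w0 : T.State)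
    (f : Simulation R S u0 v0) (g : Simulation S T v0 w0) :
    ∃ h : Simulation R T u0 w0,
      (∀ v, h.comp.onState v = g.comp.onState (f.comp.onState v)) ∧
      (∀ e, h.comp.onMotion e = g.comp.onMotion (f.comp.onMotion e)) := by
  refine ⟨⟨compComparison R S T u0 v0 w0 f g, ?_, ?_⟩, fun v => rfl, fun e => rfl⟩
  · have h1 : f.comp.onState (reachInit R u0) = reachInit S v0 := Subtype.ext f.init
    show (g.comp.onState (f.comp.onState (reachInit R u0))).val = w0
    rw [h1]; exact g.init
  · intro v e hsrc
    have hsrc : (reach T w0).src e = g.comp.onState (f.comp.onState v) := hsrc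
    obtain ⟨ls, e', s', hpath, hrefl, he'⟩ := g.lift (f.comp.onState v) e hsrc
    obtain ⟨u, hls, hu⟩ := (isPath_append _ ls [e'] _ s').1 hpath
    obtain ⟨hsrce', _⟩ := hu
    have hsrce' : (reach S v0).src e' = u := hsrce'
    obtain ⟨L, v', hLpath, hLrefl, hfv'⟩ :=
      lift_list R S T u0 v0 w0 f g (g.comp.onState (f.comp.onState v)) ls v u hls rfl hrefl
    obtain ⟨l₂, e'', v'', hpath₂, hrefl₂, he''⟩ :=
      f.lift v' e' (by rw [hsrce', hfv'])
    have hge : g.comp.onState (f.comp.onState v') =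
        g.comp.onState (f.comp.onState v) := by
      rw [hfv', ← hsrce', ← g.comp.src_eq, he', hsrc]
    refine ⟨L ++ l₂, e'', v'', ?_, ?_,
      show g.comp.onMotion (f.comp.onMotion e'') = e by rw [he'', he']⟩
    · rw [List.append_assoc]
      exact isPath_concat _ hLpath hpath₂
    · intro m hm
      show g.comp.onMotion (f.comp.onMotion m) =
        (reach T w0).refl (g.comp.onState (f.comp.onState v))
      rcases List.mem_append.1 hm with hm | hm
      · exact hLrefl m hm
      · rw [hrefl₂ m hm, g.comp.refl_eq, hge]
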